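/- For every infinite binary word x, the following are equivalent: (i) 0·μ(x) is overlap-free and μ(x) begins with 010; (ii) 1·x is overlap-free and x begins with 00. -/

import Mathlib

/-- An overlap: a word of the form a x a x a, with `a` a single letter. -/
def Overlap (w : List (Fin 2)) : Prop :=
  ∃ (a : Fin 2) (x : List (Fin 2)), w = [a] ++ x ++ [a] ++ x ++ [a]

/-- `w` occurs as a (contiguous) factor of the infinite word `x`. -/
def FactorOf (w : List (Fin 2)) (x : ℕ → Fin 2) : Prop :=
  ∃ i, w = (List.range w.length).map (fun j => x (i + j))

/-- An infinite binary word is overlap-free if no finite factor is an overlap. -/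
def OverlapFree (x : ℕ → Fin 2) : Prop :=
  ∀ w, FactorOf w x → ¬ Overlap w

/-- The Thue–Morse morphism applied to an infinite word. -/
def mu (x : ℕ → Fin 2) : ℕ → Fin 2 :=
  fun n => if n % 2 = 0 then x (n / 2) else 1 - x (n / 2)

/-- Prepend a finite word to an infinite word. -/
def prepend (p : List (Fin 2)) (w : ℕ → Fin 2) : ℕ → Fin 2 :=
  fun n => if h : n < p.length then p.get ⟨n, h⟩ else w (n - p.length)

/-- `x` begins with the finite word `p`. -/
def BeginsWith (x : ℕ → Fin 2) (p : List (Fin 2)) : Prop :=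
  ∀ i < p.length, x i = p.getD i 0

/- ### Auxiliary lemmas -/

lemma fin2_sub_ne (a : Fin 2) : 1 - a ≠ a := by revert a; decide

lemma fin2_sub_inj {a b : Fin 2} (h : 1 - a = 1 - b) : a = b := by revert a b; decide

lemma fin2_flip {a b : Fin 2} (h : a = 1 - b) : b = 1 - a := by revert a b; decide

/-- A "periodic window": period `s` holding on a window of length `2s+1`. -/
def PerWin (x : ℕ → Fin 2) : Prop :=
  ∃ i s, 0 < s ∧ ∀ j ≤ s, x (i + j) = x (i + j + s)

lemma range_decomp (s : ℕ) :
    List.range (2 * s + 1)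
      = List.range s ++ (List.range s).map (fun j => s + j) ++ [2 * s] := by
  have h1 : 2 * s + 1 = s + (s + 1) := by ring
  rw [h1, List.range_add, List.range_succ, List.map_append]
  simp [List.append_assoc, two_mul]

lemma overlap_of_periodic (f : ℕ → Fin 2) (s : ℕ) (hs : 0 < s)
    (h : ∀ j ≤ s, f j = f (j + s)) :
    Overlap ((List.range (2 * s + 1)).map f) := by
  refine ⟨f 0, (List.range (s - 1)).map (fun j => f (j + 1)), ?_⟩
  have hB : (List.range s).map f
      = [f 0] ++ (List.range (s - 1)).map (fun j => f (j + 1)) := by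
    conv_lhs => rw [show s = (s - 1) + 1 by omega, List.range_succ_eq_map]
    simp [List.map_map, Function.comp_def, Nat.succ_eq_add_one, Nat.add_comm]
  have hC : (List.range s).map (fun j => f (s + j)) = (List.range s).map f := by
    apply List.map_congr_left
    intro j hj
    rw [List.mem_range] at hj
    rw [Nat.add_comm, ← h j (le_of_lt hj)]
  have hlast : f (2 * s) = f 0 := by
    calc f (2 * s) = f (s + s) := by rw [two_mul]
      _ = f s := (h s le_rfl).symm
      _ = f (0 + s) := by rw [Nat.zero_add]
      _ = f 0 := (h 0 (Nat.zero_le _)).symm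
  rw [range_decomp, List.map_append, List.map_append, List.map_map, List.map_cons,
    List.map_nil]
  simp only [Function.comp_def]
  rw [hC, hlast, hB]
  simp [List.append_assoc]

lemma periodic_of_overlap (x : ℕ → Fin 2) (w : List (Fin 2)) (i : ℕ)
    (hw : w = (List.range w.length).map (fun j => x (i + j)))
    (hov : Overlap w) : PerWin x := by
  obtain ⟨a, y, hy⟩ := hov
  set s : ℕ := y.length + 1 with hs
  set f : ℕ → Fin 2 := fun j => x (i + j) with hf
  have hlen : w.length = 2 * s + 1 := by
    rw [hy]; simp [hs]; omega
  have hw2 : (List.range s).map f ++ (List.range s).map (fun j => f (s + j)) ++ [f (2 * s)]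
      = ((a :: y) ++ (a :: y)) ++ [a] := by
    have e : (List.range (2 * s + 1)).map f = ((a :: y) ++ (a :: y)) ++ [a] := by
      rw [← hlen, ← hw, hy]; simp [List.append_assoc]
    rw [range_decomp, List.map_append, List.map_append, List.map_map, List.map_cons,
      List.map_nil] at e
    simpa only [Function.comp_def] using e
  have hlen1 : ((List.range s).map f ++ (List.range s).map (fun j => f (s + j))).length
      = ((a :: y) ++ (a :: y)).length := by simp; omega
  obtain ⟨h12, h3⟩ := List.append_inj hw2 hlen1
  obtain ⟨h1, h2⟩ := List.append_inj h12 (by simp [hs])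
  have hpt : ∀ j, j < s → f j = f (s + j) := by
    intro j hj
    have e1 : ((List.range s).map f)[j]'(by simp [hj]) = (a :: y)[j]'(by simp; omega) :=
      List.getElem_of_eq h1 _
    have e2 : ((List.range s).map (fun j => f (s + j)))[j]'(by simp [hj])
        = (a :: y)[j]'(by simp; omega) := List.getElem_of_eq h2 _
    rw [List.getElem_map, List.getElem_range] at e1 e2
    rw [e1, ← e2]
  have hfs : f s = a := by
    have e2 : ((List.range s).map (fun j => f (s + j)))[0]'(by simp [hs])
        = (a :: y)[0]'(by simp) := List.getElem_of_eq h2 _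
    simpa using e2
  have hf2s : f (2 * s) = a := by simpa using h3
  refine ⟨i, s, by omega, ?_⟩
  intro j hj
  rcases lt_or_eq_of_le hj with hj | hj
  · have := hpt j hj
    simpa [hf, show i + (s + j) = i + j + s by omega] using this
  · subst hj
    have : f s = f (2 * s) := by rw [hfs, hf2s]
    simpa [hf, show i + 2 * s = i + s + s by omega] using this

lemma overlapFree_iff_not_perWin (x : ℕ → Fin 2) : OverlapFree x ↔ ¬ PerWin x := by
  constructor
  · intro hOF ⟨i, s, hs, hper⟩
    set w : List (Fin 2) := (List.range (2 * s + 1)).map (fun j => x (i + j)) with hw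
    have hfac : FactorOf w x := ⟨i, by rw [hw]; simp⟩
    refine hOF w hfac ?_
    rw [hw]
    exact overlap_of_periodic (fun j => x (i + j)) s hs
      (fun j hj => by simpa [show i + (j + s) = i + j + s by omega] using hper j hj)
  · intro hnp w ⟨i, hw⟩ hov
    exact hnp (periodic_of_overlap x w i hw hov)

/- ### Arithmetic facts about `mu` and `prepend` -/

lemma mu_eq_of (x : ℕ → Fin 2) {m m' : ℕ} (hpar : m % 2 = m' % 2)
    (hx : x (m / 2) = x (m' / 2)) : mu x m = mu x m' := by
  simp only [mu]
  rcases Nat.mod_two_eq_zero_or_one m with h | h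
  · rw [if_pos h, if_pos (hpar ▸ h), hx]
  · rw [if_neg (by omega), if_neg (by rw [← hpar]; omega), hx]

lemma prepend_zero (p : Fin 2) (w : ℕ → Fin 2) : prepend [p] w 0 = p := by
  simp [prepend]

lemma prepend_succ (p : Fin 2) (w : ℕ → Fin 2) (n : ℕ) : prepend [p] w (n + 1) = w n := by
  simp [prepend]

lemma mu_even (x : ℕ → Fin 2) (n : ℕ) : mu x (2 * n) = x n := by
  simp [mu, Nat.mul_div_cancel_left, Nat.mul_mod_right]

lemma mu_odd (x : ℕ → Fin 2) (n : ℕ) : mu x (2 * n + 1) = 1 - x n := by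
  have h1 : (2 * n + 1) % 2 = 1 := by omega
  have h2 : (2 * n + 1) / 2 = n := by omega
  simp [mu, h1, h2]

/-- `0·μ(x)` is the shift of `μ(1·x)`. -/
lemma shift_eq (x : ℕ → Fin 2) (n : ℕ) :
    prepend [0] (mu x) n = mu (prepend [1] x) (n + 1) := by
  rcases n with _ | m
  · have : mu (prepend [1] x) 1 = 1 - prepend [1] x 0 := mu_odd (prepend [1] x) 0
    rw [prepend_zero, this, prepend_zero]
    decide
  · rw [prepend_succ]
    rcases Nat.even_or_odd m with ⟨k, hk⟩ | ⟨k, hk⟩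
    · subst hk
      have h1 : mu x (k + k) = x k := by rw [show k + k = 2 * k by ring, mu_even]
      have h2 : mu (prepend [1] x) (k + k + 1 + 1) = prepend [1] x (k + 1) := by
        rw [show k + k + 1 + 1 = 2 * (k + 1) by ring, mu_even]
      rw [h1, h2, prepend_succ]
    · subst hk
      have h1 : mu x (2 * k + 1) = 1 - x k := mu_odd x k
      have h2 : mu (prepend [1] x) (2 * k + 1 + 1 + 1) = 1 - prepend [1] x (k + 1) := by
        rw [show 2 * k + 1 + 1 + 1 = 2 * (k + 1) + 1 by ring, mu_odd]
      rw [h1, h2, prepend_succ]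

/-- Core inverse lemma: a periodic window in `μ(z)` yields one in `z`. -/
lemma core (z : ℕ → Fin 2) (p s : ℕ) (hs : 0 < s)
    (h : ∀ j ≤ s, mu z (p + j) = mu z (p + j + s)) : PerWin z := by
  rcases Nat.even_or_odd s with ⟨t, ht⟩ | ⟨t, ht⟩
  · -- s = 2t, even case: z has a window of period t at p/2
    have ht0 : 0 < t := by omega
    refine ⟨p / 2, t, ht0, ?_⟩
    intro j hj
    have hper := h (2 * j) (by omega)
    have he1 : (p + 2 * j) / 2 = p / 2 + j := by omega
    have he2 : (p + 2 * j + s) / 2 = p / 2 + j + t := by omega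
    have hpar : (p + 2 * j) % 2 = (p + 2 * j + s) % 2 := by omega
    simp only [mu] at hper
    rcases Nat.mod_two_eq_zero_or_one (p + 2 * j) with hm | hm
    · rw [if_pos hm, if_pos (hpar ▸ hm), he1, he2] at hper
      exact hper
    · rw [if_neg (by omega), if_neg (by rw [← hpar]; omega), he1, he2] at hper
      exact fin2_sub_inj hper
  · -- s = 2t+1, odd case: contradiction
    exfalso
    have hE : ∀ n, p ≤ 2 * n → 2 * n ≤ p + s → z (n + t) = 1 - z n := by
      intro n h1 h2
      have hper := h (2 * n - p) (by omega)
      rw [show p + (2 * n - p) = 2 * n by omega,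
        show 2 * n + s = 2 * (n + t) + 1 by omega, mu_even, mu_odd] at hper
      exact fin2_flip hper
    have hO : ∀ n, p ≤ 2 * n + 1 → 2 * n + 1 ≤ p + s → z (n + t + 1) = 1 - z n := by
      intro n h1 h2
      have hper := h (2 * n + 1 - p) (by omega)
      rw [show p + (2 * n + 1 - p) = 2 * n + 1 by omega,
        show 2 * n + 1 + s = 2 * (n + t + 1) by omega, mu_odd, mu_even] at hper
      exact hper.symm
    set m : ℕ := (p + 1) / 2 with hm
    have hstep : ∀ n, m ≤ n → n < m + t → z n = z (n + 1) := by
      intro n h1 h2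
      have hOn : z (n + t + 1) = 1 - z n := hO n (by omega) (by omega)
      have hEn : z (n + 1 + t) = 1 - z (n + 1) := hE (n + 1) (by omega) (by omega)
      rw [show n + 1 + t = n + t + 1 by ring, hOn] at hEn
      exact fin2_sub_inj hEn
    have hconst : ∀ k ≤ t, z m = z (m + k) := by
      intro k hk
      induction k with
      | zero => rfl
      | succ k ih =>
          rw [ih (by omega), show m + (k + 1) = (m + k) + 1 by ring]
          exact hstep (m + k) (by omega) (by omega)
    have hEm : z (m + t) = 1 - z m := hE m (by omega) (by omega)
    rw [← hconst t le_rfl] at hEm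
    exact fin2_sub_ne (z m) hEm.symm

/-- A window in `z` of period `s` gives a window in `μ(z)` of period `2s` (doubled). -/
lemma mu_window (x : ℕ → Fin 2) (q s : ℕ)
    (h : ∀ k ≤ s, x (q + k) = x (q + k + s)) :
    ∀ j ≤ 2 * s, mu x (2 * q + j) = mu x (2 * q + j + 2 * s) := by
  intro j hj
  apply mu_eq_of
  · omega
  · have e1 : (2 * q + j) / 2 = q + j / 2 := by omega
    have e2 : (2 * q + j + 2 * s) / 2 = q + j / 2 + s := by omega
    rw [e1, e2]
    exact h (j / 2) (by omega)

/-- Backward: `1·x` has no periodic window → `0·μ(x)` has none. -/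
lemma backward_dir (x : ℕ → Fin 2) (h : ¬ PerWin (prepend [1] x)) :
    ¬ PerWin (prepend [0] (mu x)) := by
  rintro ⟨i, s, hs, hper⟩
  apply h
  apply core (prepend [1] x) (i + 1) s hs
  intro j hj
  have := hper j hj
  rwa [shift_eq, shift_eq, show i + j + 1 = i + 1 + j by omega,
    show i + j + s + 1 = i + 1 + j + s by omega] at this

/-- Forward: `0·μ(x)` has no periodic window → `1·x` has none. -/
lemma forward_dir (x : ℕ → Fin 2) (h : ¬ PerWin (prepend [0] (mu x))) :
    ¬ PerWin (prepend [1] x) := by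
  rintro ⟨i, s, hs, hper⟩
  apply h
  rcases Nat.eq_zero_or_pos i with hi | hi
  · -- window at position 0 in 1·x
    subst hi
    simp only [Nat.zero_add] at hper
    -- x(s-1) = 1
    have hx1 : x (s - 1) = 1 := by
      have h0 := hper 0 (Nat.zero_le _)
      rw [Nat.zero_add, show s = (s - 1) + 1 by omega, prepend_succ] at h0
      exact h0.symm
    -- x k = x (k+s) for k ≤ s - 1
    have hxk : ∀ k, k + 1 ≤ s → x k = x (k + s) := by
      intro k hk
      have := hper (k + 1) hk
      rwa [prepend_succ, show k + 1 + s = (k + s) + 1 by omega,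
        prepend_succ] at this
    refine ⟨0, 2 * s, by omega, ?_⟩
    intro j hj
    simp only [Nat.zero_add]
    rcases Nat.eq_zero_or_pos j with hj0 | hj0
    · subst hj0
      rw [Nat.zero_add, show 2 * s = (2 * s - 1) + 1 by omega, prepend_succ,
        show 2 * s - 1 = 2 * (s - 1) + 1 by omega, mu_odd, hx1, prepend_zero]
      decide
    · rw [show j = (j - 1) + 1 by omega, prepend_succ,
        show j - 1 + 1 + 2 * s = (j - 1 + 2 * s) + 1 by omega, prepend_succ]
      apply mu_eq_of
      · omega
      · rw [show (j - 1 + 2 * s) / 2 = (j - 1) / 2 + s by omega]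
        exact hxk ((j - 1) / 2) (by omega)
  · -- window at position i ≥ 1 in 1·x comes from a window in x at i-1
    have hxw : ∀ k ≤ s, x (i - 1 + k) = x (i - 1 + k + s) := by
      intro k hk
      have := hper k hk
      rwa [show i + k = (i - 1 + k) + 1 by omega, prepend_succ,
        show i - 1 + k + 1 + s = (i - 1 + k + s) + 1 by omega, prepend_succ] at this
    have hmw := mu_window x (i - 1) s hxw
    refine ⟨2 * (i - 1) + 1, 2 * s, by omega, ?_⟩
    intro j hj
    rw [show 2 * (i - 1) + 1 + j = (2 * (i - 1) + j) + 1 by omega, prepend_succ,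
      show 2 * (i - 1) + j + 1 + 2 * s = (2 * (i - 1) + j + 2 * s) + 1 by omega, prepend_succ]
    exact hmw j hj

lemma begins_iff (x : ℕ → Fin 2) :
    BeginsWith (mu x) [0, 1, 0] ↔ BeginsWith x [0, 0] := by
  have h0 : mu x 0 = x 0 := by simpa using mu_even x 0
  have h1 : mu x 1 = 1 - x 0 := by simpa using mu_odd x 0
  have h2 : mu x 2 = x 1 := by simpa using mu_even x 1
  constructor
  · intro h i hi
    have hi3 : i < 2 := by simpa using hi
    interval_cases i
    · have := h 0 (by norm_num)
      rw [h0] at this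
      simpa using this
    · have := h 2 (by norm_num)
      rw [h2] at this
      simpa using this
  · intro h i hi
    have hx0 : x 0 = 0 := by simpa using h 0 (by norm_num)
    have hx1 : x 1 = 0 := by simpa using h 1 (by norm_num)
    have hi3 : i < 3 := by simpa using hi
    interval_cases i
    · rw [h0, hx0]; rfl
    · rw [h1, hx0]; rfl
    · rw [h2, hx1]; rfl

theorem zero_mu_begins_010_iff (x : ℕ → Fin 2) :
    (OverlapFree (prepend [0] (mu x)) ∧ BeginsWith (mu x) [0, 1, 0]) ↔
      (OverlapFree (prepend [1] x) ∧ BeginsWith x [0, 0]) := by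
  rw [overlapFree_iff_not_perWin, overlapFree_iff_not_perWin, begins_iff]
  constructor
  · rintro ⟨hOF, hB⟩
    exact ⟨forward_dir x hOF, hB⟩
  · rintro ⟨hOF, hB⟩
    exact ⟨backward_dir x hOF, hB⟩
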